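/- Let (G,ψ) be a Γ-gain graph and let H₁, H₂ be subgraphs of G with V₀(H₁) = V₀(H₂) = ∅. Suppose H₁ is proper near-balanced, |E(H₁)| = 2|V(H₁)|, and there is an edge f₁ ∈ E(H₁) such that H₁ − f₁ is (2,1)-tight. If H₂ is connected and balanced, and H₁ ∩ H₂ is connected, balanced and (2,3)-tight, then H₁ ∪ H₂ is proper near-balanced. -/

import Mathlib

open scoped Classical

namespace GR

/-- A finite directed multigraph with edge labels ("gains") in a group `Γ` and a
designated finite set of fixed vertices. -/
structure GainedGraph (V E Γ : Type) where
  tail : E → V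
  head : E → V
  gain : E → Γ
  fixed : Finset V

variable {V E Γ : Type} [DecidableEq V] [DecidableEq E] [Fintype V] [Fintype E] [Group Γ]

/-- A subgraph: a set of vertices and a set of edges whose endpoints lie in the vertex set. -/
structure Subgraph (G : GainedGraph V E Γ) where
  verts : Finset V
  edges : Finset E
  tail_mem : ∀ e ∈ edges, G.tail e ∈ verts
  head_mem : ∀ e ∈ edges, G.head e ∈ verts

namespace Subgraph

variable {G : GainedGraph V E Γ}

instance : Top (Subgraph G) :=
  ⟨⟨Finset.univ, Finset.univ, fun _ _ => Finset.mem_univ _, fun _ _ => Finset.mem_univ _⟩⟩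

instance : LE (Subgraph G) :=
  ⟨fun H K => H.verts ⊆ K.verts ∧ H.edges ⊆ K.edges⟩

def union (H K : Subgraph G) : Subgraph G where
  verts := H.verts ∪ K.verts
  edges := H.edges ∪ K.edges
  tail_mem e he := by
    rcases Finset.mem_union.1 he with h | h
    · exact Finset.mem_union_left _ (H.tail_mem e h)
    · exact Finset.mem_union_right _ (K.tail_mem e h)
  head_mem e he := by
    rcases Finset.mem_union.1 he with h | h
    · exact Finset.mem_union_left _ (H.head_mem e h)
    · exact Finset.mem_union_right _ (K.head_mem e h)

def inter (H K : Subgraph G) : Subgraph G where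
  verts := H.verts ∩ K.verts
  edges := H.edges ∩ K.edges
  tail_mem e he := by
    rcases Finset.mem_inter.1 he with ⟨h1, h2⟩
    exact Finset.mem_inter.2 ⟨H.tail_mem e h1, K.tail_mem e h2⟩
  head_mem e he := by
    rcases Finset.mem_inter.1 he with ⟨h1, h2⟩
    exact Finset.mem_inter.2 ⟨H.head_mem e h1, K.head_mem e h2⟩

/-- Delete a vertex together with all edges incident to it. -/
def deleteVertex (H : Subgraph G) (v : V) : Subgraph G where
  verts := H.verts.erase v
  edges := H.edges.filter fun e => G.tail e ≠ v ∧ G.head e ≠ v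
  tail_mem e he := by
    rcases Finset.mem_filter.1 he with ⟨h1, h2, h3⟩
    exact Finset.mem_erase.2 ⟨h2, H.tail_mem e h1⟩
  head_mem e he := by
    rcases Finset.mem_filter.1 he with ⟨h1, h2, h3⟩
    exact Finset.mem_erase.2 ⟨h3, H.head_mem e h1⟩

/-- Delete an edge. -/
def deleteEdge (H : Subgraph G) (f : E) : Subgraph G where
  verts := H.verts
  edges := H.edges.erase f
  tail_mem e he := H.tail_mem e (Finset.mem_of_mem_erase he)
  head_mem e he := H.head_mem e (Finset.mem_of_mem_erase he)

/-- Add an edge (together with its endpoints). -/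
def addEdge (H : Subgraph G) (f : E) : Subgraph G where
  verts := insert (G.tail f) (insert (G.head f) H.verts)
  edges := insert f H.edges
  tail_mem e he := by
    rcases Finset.mem_insert.1 he with rfl | h
    · exact Finset.mem_insert_self _ _
    · exact Finset.mem_insert_of_mem (Finset.mem_insert_of_mem (H.tail_mem e h))
  head_mem e he := by
    rcases Finset.mem_insert.1 he with rfl | h
    · exact Finset.mem_insert_of_mem (Finset.mem_insert_self _ _)
    · exact Finset.mem_insert_of_mem (Finset.mem_insert_of_mem (H.head_mem e h))

/-- The free vertices of a subgraph. -/
def freeVerts (H : Subgraph G) : Finset V := H.verts \ G.fixed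

/-- The fixed vertices of a subgraph. -/
def fixedVerts (H : Subgraph G) : Finset V := H.verts ∩ G.fixed

end Subgraph

/-- The starting vertex of an oriented traversal of an edge. -/
def stepStart (G : GainedGraph V E Γ) (s : E × Bool) : V :=
  if s.2 then G.tail s.1 else G.head s.1

/-- The ending vertex of an oriented traversal of an edge. -/
def stepEnd (G : GainedGraph V E Γ) (s : E × Bool) : V :=
  if s.2 then G.head s.1 else G.tail s.1

/-- The gain contributed by an oriented traversal of an edge. -/
def stepGain (G : GainedGraph V E Γ) (s : E × Bool) : Γ :=
  if s.2 then G.gain s.1 else (G.gain s.1)⁻¹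

/-- `IsWalk G H L u w` : `L` is a walk in the subgraph `H` from `u` to `w`. -/
def IsWalk (G : GainedGraph V E Γ) (H : Subgraph G) : List (E × Bool) → V → V → Prop
  | [], u, w => u = w ∧ u ∈ H.verts
  | s :: L, u, w => s.1 ∈ H.edges ∧ stepStart G s = u ∧ IsWalk G H L (stepEnd G s) w

/-- The gain of a walk. -/
def walkGain (G : GainedGraph V E Γ) (L : List (E × Bool)) : Γ :=
  (L.map (stepGain G)).prod

/-- The vertices visited by a walk starting at `u`. -/
def walkVerts (G : GainedGraph V E Γ) (u : V) (L : List (E × Bool)) : List V :=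
  u :: L.map (stepEnd G)

/-- `⟨H⟩` : the subgroup of `Γ` generated by the gains of all closed walks in `H`
containing no fixed vertex. -/
def gainGroup (G : GainedGraph V E Γ) (H : Subgraph G) : Subgroup Γ :=
  Subgroup.closure
    {g | ∃ u L, IsWalk G H L u u ∧ (∀ x ∈ walkVerts G u L, x ∉ G.fixed) ∧ walkGain G L = g}

/-- A subgraph is balanced if its gain group is trivial. -/
def Balanced (G : GainedGraph V E Γ) (H : Subgraph G) : Prop := gainGroup G H = ⊥

def Reachable (G : GainedGraph V E Γ) (H : Subgraph G) (u w : V) : Prop :=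
  ∃ L, IsWalk G H L u w

def Connected (G : GainedGraph V E Γ) (H : Subgraph G) : Prop :=
  H.verts.Nonempty ∧ ∀ u ∈ H.verts, ∀ w ∈ H.verts, Reachable G H u w

/-- `v` is a cut-vertex of the subgraph `H`. -/
def IsCutVertex (G : GainedGraph V E Γ) (H : Subgraph G) (v : V) : Prop :=
  v ∈ H.verts ∧ ∃ u ∈ H.verts, ∃ w ∈ H.verts, u ≠ v ∧ w ≠ v ∧
    Reachable G H u w ∧ ¬ Reachable G (H.deleteVertex v) u w

/-- `(2,m,l)`-sparsity of the subgraph `K`. -/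
def Sparse (G : GainedGraph V E Γ) (m l : ℤ) (K : Subgraph G) : Prop :=
  ∀ H : Subgraph G, H ≤ K → H.edges.Nonempty →
    (H.edges.card : ℤ) ≤ 2 * (H.freeVerts.card : ℤ) + m * (H.fixedVerts.card : ℤ) - l

/-- `(2,m,l)`-tightness of the subgraph `K`. -/
def Tight (G : GainedGraph V E Γ) (m l : ℤ) (K : Subgraph G) : Prop :=
  Sparse G m l K ∧
    (K.edges.card : ℤ) = 2 * (K.freeVerts.card : ℤ) + m * (K.fixedVerts.card : ℤ) - l

/-- `(2,m,3,l)`-gain-tightness: `(2,m,l)`-tight and every balanced subgraph with a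
nonempty edge set is `(2,3)`-sparse. -/
def GainTight23 (G : GainedGraph V E Γ) (m l : ℤ) (K : Subgraph G) : Prop :=
  Tight G m l K ∧ ∀ H : Subgraph G, H ≤ K → H.edges.Nonempty → Balanced G H →
    (H.edges.card : ℤ) ≤ 2 * (H.verts.card : ℤ) - 3

/-- The subgraph has no fixed vertex. -/
def NoFixed (G : GainedGraph V E Γ) (H : Subgraph G) : Prop :=
  ∀ x ∈ H.verts, x ∉ G.fixed

/-- Near-balanced with base vertex `v` and gain `δ`: unbalanced, and every closed
walk starting at `v` not containing `v` as an internal vertex has gain `1`, `δ` or `δ⁻¹`. -/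
def NearBalancedAt (G : GainedGraph V E Γ) (H : Subgraph G) (v : V) (δ : Γ) : Prop :=
  ¬ Balanced G H ∧ ∀ L, IsWalk G H L v v →
    (∀ x ∈ (L.map (stepEnd G)).dropLast, x ≠ v) → walkGain G L ∈ ({1, δ, δ⁻¹} : Set Γ)

def NearBalanced (G : GainedGraph V E Γ) (H : Subgraph G) : Prop :=
  NoFixed G H ∧ ∃ v ∈ H.verts, ∃ δ : Γ, NearBalancedAt G H v δ

/-- The gain group of `H` is isomorphic to `ℤ_n`. -/
def IsZIso (G : GainedGraph V E Γ) (H : Subgraph G) (n : ℕ) : Prop :=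
  Nonempty (gainGroup G H ≃* Multiplicative (ZMod n))

def ProperNearBalanced (G : GainedGraph V E Γ) (H : Subgraph G) : Prop :=
  NearBalanced G H ∧ ¬ IsZIso G H 2 ∧ ¬ IsZIso G H 3

/-- The set `S_i(k,j)`. -/
def SSet (k j : ℕ) (i : ℤ) : Set ℕ :=
  {n | 2 ≤ n ∧ n ∣ k ∧ (Odd j → n ≠ 2) ∧ ((j : ZMod n) = (i : ZMod n))}

/-- `H` is `S_i(k,j)`. -/
def IsS (G : GainedGraph V E Γ) (k j : ℕ) (i : ℤ) (H : Subgraph G) : Prop :=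
  ∃ n ∈ SSet k j i, IsZIso G H n

/-- `H` is `S_{±1}(k,j)`. -/
def IsSpm (G : GainedGraph V E Γ) (k j : ℕ) (H : Subgraph G) : Prop :=
  IsS G k j (-1) H ∨ IsS G k j 1 H

/-- The function `α_k^j` on (connected) subgraphs. -/
noncomputable def alpha (G : GainedGraph V E Γ) (k j : ℕ) (X : Subgraph G) : ℤ :=
  if Balanced G X then 0
  else if Odd j ∧ IsZIso G X 2 then 1
  else if IsSpm G k j X then 2 - (X.fixedVerts.card : ℤ)
  else if IsS G k j 0 X ∨ (X.fixedVerts.card = 0 ∧ ProperNearBalanced G X) then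
    2 - 2 * (X.fixedVerts.card : ℤ)
  else 3 - 2 * (X.fixedVerts.card : ℤ)

/-- The subgraph spanned by a set of edges. -/
def edgeSpan (G : GainedGraph V E Γ) (F : Finset E) : Subgraph G where
  verts := F.image G.tail ∪ F.image G.head
  edges := F
  tail_mem e he := Finset.mem_union_left _ (Finset.mem_image_of_mem _ he)
  head_mem e he := Finset.mem_union_right _ (Finset.mem_image_of_mem _ he)

/-- The connected component of the edge `e` in the subgraph spanned by `F`. -/
noncomputable def componentOf (G : GainedGraph V E Γ) (F : Finset E) (e : E) : Subgraph G :=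
  edgeSpan G (F.filter fun f => Reachable G (edgeSpan G F) (G.tail e) (G.tail f))

/-- The connected components of the edge set `F`. -/
noncomputable def components (G : GainedGraph V E Γ) (F : Finset E) : Finset (Subgraph G) :=
  F.image (componentOf G F)

/-- The count `f_k^j(F) = Σ_{X ∈ C(F)} (2|V(X)| − 3 + α_k^j(X))`. -/
noncomputable def fCount (G : GainedGraph V E Γ) (k j : ℕ) (F : Finset E) : ℤ :=
  ∑ X ∈ components G F, (2 * (X.verts.card : ℤ) - 3 + alpha G k j X)

/-- `ℤ_k^j`-gain sparsity. -/
def GainSparseKJ (G : GainedGraph V E Γ) (k j : ℕ) (K : Subgraph G) : Prop :=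
  ∀ H : Subgraph G, H ≤ K → H.edges.Nonempty → (H.edges.card : ℤ) ≤ fCount G k j H.edges

/-- `ℤ_k^j`-gain tightness. -/
def GainTightKJ (G : GainedGraph V E Γ) (k j : ℕ) (K : Subgraph G) : Prop :=
  GainSparseKJ G k j K ∧ (K.edges.card : ℤ) = fCount G k j K.edges

/-- The degree of a vertex in a subgraph (a loop counts twice). -/
def degree (G : GainedGraph V E Γ) (K : Subgraph G) (v : V) : ℕ :=
  (K.edges.filter fun e => G.tail e = v).card + (K.edges.filter fun e => G.head e = v).card

def HasLoopAt (G : GainedGraph V E Γ) (K : Subgraph G) (v : V) : Prop :=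
  ∃ e ∈ K.edges, G.tail e = v ∧ G.head e = v

/-- The neighbours of a vertex in a subgraph. -/
def neighbors (G : GainedGraph V E Γ) (K : Subgraph G) (v : V) : Finset V :=
  ((K.edges.filter fun e => G.tail e = v).image G.head) ∪
    ((K.edges.filter fun e => G.head e = v).image G.tail)

/-- The subgraph `K` satisfies the axioms of a `Γ`-gain graph. -/
structure IsGainGraphOn (G : GainedGraph V E Γ) (K : Subgraph G) : Prop where
  fixed_card : K.fixedVerts.card ≤ 1
  same_dir : ∀ e ∈ K.edges, ∀ f ∈ K.edges, e ≠ f → G.tail e = G.tail f →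
    G.head e = G.head f → G.gain e ≠ G.gain f
  opp_dir : ∀ e ∈ K.edges, ∀ f ∈ K.edges, e ≠ f → G.tail e = G.head f →
    G.head e = G.tail f → G.gain e ≠ (G.gain f)⁻¹
  fixed_not_loop : ∀ e ∈ K.edges, G.tail e = G.head e → G.tail e ∉ G.fixed
  fixed_not_parallel : ∀ e ∈ K.edges, ∀ f ∈ K.edges, e ≠ f →
    (G.tail e ∈ G.fixed ∨ G.head e ∈ G.fixed) →
    ({G.tail e, G.head e} : Finset V) ≠ {G.tail f, G.head f}
  loop_gain : ∀ e ∈ K.edges, G.tail e = G.head e → G.gain e ≠ 1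

/-- `H` together with the vertex `v` and all edges of `G₀` incident to `v`. -/
def addVertexEdges (G : GainedGraph V E Γ) (G₀ H : Subgraph G) (v : V) : Subgraph G where
  verts := (H.verts ∪ {v}) ∪
    ((G₀.edges.filter fun e => G.tail e = v ∨ G.head e = v).image G.tail ∪
      (G₀.edges.filter fun e => G.tail e = v ∨ G.head e = v).image G.head)
  edges := H.edges ∪ G₀.edges.filter fun e => G.tail e = v ∨ G.head e = v
  tail_mem e he := by
    rcases Finset.mem_union.1 he with h | h
    · exact Finset.mem_union_left _ (Finset.mem_union_left _ (H.tail_mem e h))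
    · exact Finset.mem_union_right _ (Finset.mem_union_left _ (Finset.mem_image_of_mem _ h))
  head_mem e he := by
    rcases Finset.mem_union.1 he with h | h
    · exact Finset.mem_union_left _ (Finset.mem_union_left _ (H.head_mem e h))
    · exact Finset.mem_union_right _ (Finset.mem_union_right _ (Finset.mem_image_of_mem _ h))

/-- The result of a 1-reduction at `v` adding the edge `f`: delete `v` and all edges at
`v` and add the edge `f`. -/
def reduceAt (G : GainedGraph V E Γ) (G₀ : Subgraph G) (v : V) (f : E) : Subgraph G where
  verts := insert (G.tail f) (insert (G.head f) (G₀.verts.erase v))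
  edges := insert f (G₀.edges.filter fun e => G.tail e ≠ v ∧ G.head e ≠ v)
  tail_mem e he := by
    rcases Finset.mem_insert.1 he with rfl | h
    · exact Finset.mem_insert_self _ _
    · rcases Finset.mem_filter.1 h with ⟨h1, h2, h3⟩
      exact Finset.mem_insert_of_mem
        (Finset.mem_insert_of_mem (Finset.mem_erase.2 ⟨h2, G₀.tail_mem e h1⟩))
  head_mem e he := by
    rcases Finset.mem_insert.1 he with rfl | h
    · exact Finset.mem_insert_of_mem (Finset.mem_insert_self _ _)
    · rcases Finset.mem_filter.1 h with ⟨h1, h2, h3⟩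
      exact Finset.mem_insert_of_mem
        (Finset.mem_insert_of_mem (Finset.mem_erase.2 ⟨h3, G₀.head_mem e h1⟩))

/-- The new edge `f` arises from a 1-reduction at the vertex `v` of `G₀`: its endpoints are
joined to `v` by two distinct edges of `G₀` and its gain is the gain of the corresponding
path of length two through `v`. -/
def IsOneReduction (G : GainedGraph V E Γ) (G₀ : Subgraph G) (v : V) (f : E) : Prop :=
  f ∉ G₀.edges ∧ G.tail f ≠ v ∧ G.head f ≠ v ∧
    ∃ s₁ s₂ : E × Bool, s₁.1 ∈ G₀.edges ∧ s₂.1 ∈ G₀.edges ∧ s₁.1 ≠ s₂.1 ∧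
      stepEnd G s₁ = v ∧ stepStart G s₂ = v ∧
      G.tail f = stepStart G s₁ ∧ G.head f = stepEnd G s₂ ∧
      G.gain f = stepGain G s₁ * stepGain G s₂

/-- Two labelled edges coincide (up to reorientation with gain inversion). -/
def SameEdge (G : GainedGraph V E Γ) (e f : E) : Prop :=
  (G.tail e = G.tail f ∧ G.head e = G.head f ∧ G.gain e = G.gain f) ∨
    (G.tail e = G.head f ∧ G.head e = G.tail f ∧ G.gain e = (G.gain f)⁻¹)

/-- `H` is a blocker of the 1-reduction at `v` adding the edge `f`. -/
def IsBlocker (G : GainedGraph V E Γ) (k j : ℕ) (G₀ : Subgraph G) (v : V) (f : E)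
    (H : Subgraph G) : Prop :=
  H ≤ G₀ ∧ v ∉ H.verts ∧ G.tail f ∈ H.verts ∧ G.head f ∈ H.verts ∧ H.edges.Nonempty ∧
    Connected G (H.addEdge f) ∧
    (H.edges.card : ℤ) = 2 * (H.verts.card : ℤ) - 3 + alpha G k j (H.addEdge f)

/-- The graph `G` extended by one fresh edge `none` with tail `t`, head `h` and gain `g`. -/
def extendGraph (G : GainedGraph V E Γ) (t h : V) (g : Γ) : GainedGraph V (Option E) Γ where
  tail e := e.elim t G.tail
  head e := e.elim h G.head
  gain e := e.elim g G.gain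
  fixed := G.fixed

/-- The whole original graph `G`, viewed inside the extension. -/
def extendTop (G : GainedGraph V E Γ) (t h : V) (g : Γ) : Subgraph (extendGraph G t h g) where
  verts := Finset.univ
  edges := Finset.univ.image Option.some
  tail_mem _ _ := Finset.mem_univ _
  head_mem _ _ := Finset.mem_univ _

/-- There is an admissible 1-reduction at `v`, i.e. a choice of new edge (with
endpoints and gain coming from a path of length two through `v`) such that the
resulting `Γ`-gain graph is well defined and `ℤ_k^j`-gain tight. -/
def AdmissibleOneReductionExists (G : GainedGraph V E Γ) (k j : ℕ) (v : V) : Prop :=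
  ∃ t h : V, ∃ g : Γ,
    IsOneReduction (extendGraph G t h g) (extendTop G t h g) v none ∧
    IsGainGraphOn (extendGraph G t h g)
      (reduceAt (extendGraph G t h g) (extendTop G t h g) v none) ∧
    GainTightKJ (extendGraph G t h g) k j
      (reduceAt (extendGraph G t h g) (extendTop G t h g) v none)

end GR

namespace GR


section AuxLemmas
set_option linter.unusedSectionVars false
set_option linter.unusedVariables false
variable {V E Γ : Type} [DecidableEq V] [DecidableEq E] [Fintype V] [Fintype E] [Group Γ]
variable {G : GainedGraph V E Γ}


lemma stepStart_mem {H : Subgraph G} {s : E × Bool} (h : s.1 ∈ H.edges) :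
    stepStart G s ∈ H.verts := by
  unfold stepStart; split
  · exact H.tail_mem _ h
  · exact H.head_mem _ h

lemma stepEnd_mem {H : Subgraph G} {s : E × Bool} (h : s.1 ∈ H.edges) :
    stepEnd G s ∈ H.verts := by
  unfold stepEnd; split
  · exact H.head_mem _ h
  · exact H.tail_mem _ h

lemma step_cases (s : E × Bool) :
    (stepStart G s = G.tail s.1 ∧ stepEnd G s = G.head s.1) ∨
    (stepStart G s = G.head s.1 ∧ stepEnd G s = G.tail s.1) := by
  rcases s with ⟨e, b⟩
  cases b
  · right; simp [stepStart, stepEnd]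
  · left; simp [stepStart, stepEnd]

lemma isWalk_mono {H K : Subgraph G} (hHK : H ≤ K) :
    ∀ (L : List (E × Bool)) (u w : V), IsWalk G H L u w → IsWalk G K L u w := by
  intro L
  induction L with
  | nil => intro u w h; exact ⟨h.1, hHK.1 h.2⟩
  | cons s L ih => intro u w h; exact ⟨hHK.2 h.1, h.2.1, ih _ _ h.2.2⟩

lemma isWalk_start_mem {H : Subgraph G} {L : List (E × Bool)} {u w : V}
    (h : IsWalk G H L u w) : u ∈ H.verts := by
  cases L with
  | nil => exact h.2
  | cons s L => exact h.2.1 ▸ stepStart_mem h.1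

lemma isWalk_end_mem {H : Subgraph G} {L : List (E × Bool)} :
    ∀ {u w : V}, IsWalk G H L u w → w ∈ H.verts := by
  induction L with
  | nil => intro u w h; exact h.1 ▸ h.2
  | cons s L ih => intro u w h; exact ih h.2.2

lemma isWalk_verts_mem {H : Subgraph G} {L : List (E × Bool)} :
    ∀ {u w : V}, IsWalk G H L u w → ∀ x ∈ walkVerts G u L, x ∈ H.verts := by
  induction L with
  | nil =>
    intro u w h x hx
    rcases List.mem_singleton.1 hx with rfl
    exact h.2
  | cons s L ih =>
    intro u w h x hx
    rcases List.mem_cons.1 hx with rfl | hx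
    · exact isWalk_start_mem h
    · exact ih h.2.2 x hx

lemma isWalk_append {H : Subgraph G} {L₁ L₂ : List (E × Bool)} :
    ∀ {u w x : V}, IsWalk G H L₁ u w → IsWalk G H L₂ w x → IsWalk G H (L₁ ++ L₂) u x := by
  induction L₁ with
  | nil =>
    intro u w x h1 h2
    rw [List.nil_append]
    obtain ⟨rfl, -⟩ := h1
    exact h2
  | cons s L ih => intro u w x h1 h2; exact ⟨h1.1, h1.2.1, ih h1.2.2 h2⟩

lemma walkGain_append (L₁ L₂ : List (E × Bool)) :
    walkGain G (L₁ ++ L₂) = walkGain G L₁ * walkGain G L₂ := by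
  unfold walkGain; rw [List.map_append, List.prod_append]

lemma walkGain_cons (s : E × Bool) (L : List (E × Bool)) :
    walkGain G (s :: L) = stepGain G s * walkGain G L := by
  unfold walkGain; rw [List.map_cons, List.prod_cons]

lemma walkGain_nil : walkGain G ([] : List (E × Bool)) = 1 := rfl

lemma walkGain_single (s : E × Bool) : walkGain G [s] = stepGain G s := by
  rw [walkGain_cons, walkGain_nil, mul_one]

def revStep (s : E × Bool) : E × Bool := (s.1, !s.2)

lemma revStep_fst (s : E × Bool) : (revStep s).1 = s.1 := rfl

lemma stepStart_revStep (s : E × Bool) : stepStart G (revStep s) = stepEnd G s := by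
  rcases s with ⟨e, b⟩; cases b <;> simp [revStep, stepStart, stepEnd]

lemma stepEnd_revStep (s : E × Bool) : stepEnd G (revStep s) = stepStart G s := by
  rcases s with ⟨e, b⟩; cases b <;> simp [revStep, stepStart, stepEnd]

lemma stepGain_revStep (s : E × Bool) : stepGain G (revStep s) = (stepGain G s)⁻¹ := by
  rcases s with ⟨e, b⟩; cases b <;> simp [revStep, stepGain]

def walkRev (L : List (E × Bool)) : List (E × Bool) := (L.map revStep).reverse

lemma isWalk_rev {H : Subgraph G} {L : List (E × Bool)} :
    ∀ {u w : V}, IsWalk G H L u w → IsWalk G H (walkRev L) w u := by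
  induction L with
  | nil =>
    intro u w h
    obtain ⟨rfl, hu⟩ := h
    exact ⟨rfl, hu⟩
  | cons s L ih =>
    intro u w h
    have h1 : IsWalk G H (walkRev L) w (stepEnd G s) := ih h.2.2
    have h2 : IsWalk G H [revStep s] (stepEnd G s) u := by
      refine ⟨h.1, stepStart_revStep s, ?_, ?_⟩
      · rw [stepEnd_revStep]; exact h.2.1
      · rw [stepEnd_revStep, h.2.1]; exact h.2.1 ▸ stepStart_mem h.1
    have : walkRev (s :: L) = walkRev L ++ [revStep s] := by
      simp [walkRev]
    rw [this]
    exact isWalk_append h1 h2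

lemma walkGain_rev (L : List (E × Bool)) :
    walkGain G (walkRev L) = (walkGain G L)⁻¹ := by
  induction L with
  | nil => simp [walkRev, walkGain]
  | cons s L ih =>
    have : walkRev (s :: L) = walkRev L ++ [revStep s] := by simp [walkRev]
    rw [this, walkGain_append, ih, walkGain_single, stepGain_revStep, walkGain_cons,
      mul_inv_rev]

-- list dropLast helpers
lemma mem_of_mem_dropLast {α : Type*} : ∀ {l : List α} {a : α}, a ∈ l.dropLast → a ∈ l := by
  intro l
  induction l with
  | nil => intro a h; simp at h
  | cons b t ih =>
    intro a h
    cases t with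
    | nil => simp at h
    | cons c t' =>
      rw [List.dropLast_cons₂] at h
      rcases List.mem_cons.1 h with rfl | h
      · exact List.mem_cons_self
      · exact List.mem_cons_of_mem _ (ih h)

lemma mem_dropLast_cons {α : Type*} {a x : α} {l : List α}
    (h : x ∈ (a :: l).dropLast) : x = a ∨ x ∈ l.dropLast := by
  cases l with
  | nil => simp at h
  | cons b t =>
    rw [List.dropLast_cons₂] at h
    rcases List.mem_cons.1 h with rfl | h
    · exact Or.inl rfl
    · exact Or.inr h

lemma self_mem_dropLast_cons {α : Type*} (a : α) {l : List α} (h : l ≠ []) :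
    a ∈ (a :: l).dropLast := by
  cases l with
  | nil => exact absurd rfl h
  | cons b t => rw [List.dropLast_cons₂]; exact List.mem_cons_self

lemma mem_dropLast_cons_of_mem {α : Type*} (a : α) {x : α} {l : List α}
    (h : x ∈ l.dropLast) : x ∈ (a :: l).dropLast := by
  cases l with
  | nil => simp at h
  | cons b t => rw [List.dropLast_cons₂]; exact List.mem_cons_of_mem _ h

lemma mem_dropLast_append {α : Type*} {x : α} {l₁ l₂ : List α}
    (h : x ∈ (l₁ ++ l₂).dropLast) : x ∈ l₁ ∨ x ∈ l₂.dropLast := by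
  cases l₂ with
  | nil =>
    rw [List.append_nil] at h
    exact Or.inl (mem_of_mem_dropLast h)
  | cons b t =>
    rw [List.dropLast_append_cons] at h
    rcases List.mem_append.1 h with h | h
    · exact Or.inl h
    · exact Or.inr h

lemma isWalk_mapEnd_mem {H : Subgraph G} {L : List (E × Bool)} :
    ∀ {u w : V}, IsWalk G H L u w → ∀ x ∈ L.map (stepEnd G),
      x ∈ (L.map (stepEnd G)).dropLast ∨ x = w := by
  induction L with
  | nil => intro u w h x hx; simp at hx
  | cons s L ih =>
    intro u w h x hx
    rcases List.mem_cons.1 hx with rfl | hx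
    · cases L with
      | nil => exact Or.inr h.2.2.1
      | cons t L' =>
        left
        rw [List.map_cons]
        exact self_mem_dropLast_cons _ (by simp)
    · rcases ih h.2.2 x hx with h' | h'
      · left; rw [List.map_cons]; exact mem_dropLast_cons_of_mem _ h'
      · exact Or.inr h'


lemma balanced_walkGain {H : Subgraph G} (hnf : NoFixed G H) (hb : Balanced G H)
    {L : List (E × Bool)} {u : V} (h : IsWalk G H L u u) : walkGain G L = 1 := by
  have hmem : walkGain G L ∈ gainGroup G H :=
    Subgroup.subset_closure ⟨u, L, h, fun x hx => hnf x (isWalk_verts_mem h x hx), rfl⟩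
  rw [hb] at hmem
  exact Subgroup.mem_bot.1 hmem

lemma balanced_gain_eq {H : Subgraph G} (hnf : NoFixed G H) (hb : Balanced G H)
    {L₁ L₂ : List (E × Bool)} {u w : V} (h1 : IsWalk G H L₁ u w) (h2 : IsWalk G H L₂ u w) :
    walkGain G L₁ = walkGain G L₂ := by
  have h3 := balanced_walkGain hnf hb (isWalk_append h1 (isWalk_rev h2))
  rw [walkGain_append, walkGain_rev] at h3
  exact mul_inv_eq_one.1 h3

lemma freeVerts_of_noFixed {H : Subgraph G} (h : NoFixed G H) : H.freeVerts = H.verts := by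
  unfold Subgraph.freeVerts
  exact Finset.sdiff_eq_self_of_disjoint (Finset.disjoint_left.2 h)

lemma fixedVerts_of_noFixed {H : Subgraph G} (h : NoFixed G H) : H.fixedVerts = ∅ :=
  Finset.eq_empty_of_forall_notMem fun x hx => h x (Finset.mem_inter.1 hx).1 (Finset.mem_inter.1 hx).2


end AuxLemmas

/-- Let `H₁, H₂` be subgraphs with no fixed vertex.  Suppose `H₁` is
proper near-balanced with `|E(H₁)| = 2|V(H₁)|` and there is `f₁ ∈ E(H₁)` with
`H₁ − f₁` `(2,1)`-tight.  If `H₂` is connected and balanced and `H₁ ∩ H₂` is connected,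
balanced and `(2,3)`-tight, then `H₁ ∪ H₂` is proper near-balanced. -/
theorem union_proper_near_balanced {V E : Type} [DecidableEq V] [DecidableEq E]
    [Fintype V] [Fintype E] (k : ℕ) (hk : 0 < k)
    (G : GainedGraph V E (Multiplicative (ZMod k)))
    (hG : IsGainGraphOn G (⊤ : Subgraph G))
    (H₁ H₂ : Subgraph G)
    (hnf₁ : NoFixed G H₁) (hnf₂ : NoFixed G H₂)
    (hpnb : ProperNearBalanced G H₁)
    (hcard : H₁.edges.card = 2 * H₁.verts.card)
    (f₁ : E) (hf₁ : f₁ ∈ H₁.edges) (htight : Tight G 2 1 (H₁.deleteEdge f₁))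
    (hc₂ : Connected G H₂) (hbal₂ : Balanced G H₂)
    (hcI : Connected G (H₁.inter H₂)) (hbalI : Balanced G (H₁.inter H₂))
    (htI : Tight G 2 3 (H₁.inter H₂)) :
    ProperNearBalanced G (H₁.union H₂) := by
  classical
  obtain ⟨⟨hnfH₁, v, hv, δ, hNBA⟩, hni2, hni3⟩ := hpnb
  obtain ⟨hspI, hcardI⟩ := htI
  have hIle1 : H₁.inter H₂ ≤ H₁ :=
    ⟨Finset.inter_subset_left, Finset.inter_subset_left⟩
  have hIle2 : H₁.inter H₂ ≤ H₂ :=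
    ⟨Finset.inter_subset_right, Finset.inter_subset_right⟩
  have h1leU : H₁ ≤ H₁.union H₂ :=
    ⟨Finset.subset_union_left, Finset.subset_union_left⟩
  have hnfI : NoFixed G (H₁.inter H₂) := fun x hx => hnf₁ x (hIle1.1 hx)
  have hnfU : NoFixed G (H₁.union H₂) := by
    intro x hx
    rcases Finset.mem_union.1 hx with h | h
    · exact hnf₁ x h
    · exact hnf₂ x h
  have hEIcard : ((H₁.inter H₂).edges.card : ℤ) = 2 * ((H₁.inter H₂).verts.card : ℤ) - 3 := by
    rw [hcardI, freeVerts_of_noFixed hnfI, fixedVerts_of_noFixed hnfI]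
    simp
  -- no loops in the intersection
  have hnoloop : ∀ e ∈ (H₁.inter H₂).edges, G.tail e ≠ G.head e := by
    intro e he heq
    have hK : ∀ f ∈ ({e} : Finset E), G.tail f ∈ ({G.tail e} : Finset V) := by
      intro f hf; rw [Finset.mem_singleton.1 hf]; exact Finset.mem_singleton_self _
    have hK' : ∀ f ∈ ({e} : Finset E), G.head f ∈ ({G.tail e} : Finset V) := by
      intro f hf; rw [Finset.mem_singleton.1 hf, ← heq]; exact Finset.mem_singleton_self _
    set K : Subgraph G := ⟨{G.tail e}, {e}, hK, hK'⟩ with hKdef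
    have hKle : K ≤ H₁.inter H₂ := by
      constructor
      · intro x hx
        rw [Finset.mem_singleton.1 hx]
        exact (H₁.inter H₂).tail_mem e he
      · intro f hf
        rw [Finset.mem_singleton.1 hf]
        exact he
    have hKnf : NoFixed G K := fun x hx => hnfI x (hKle.1 hx)
    have hKs := hspI K hKle ⟨e, Finset.mem_singleton_self e⟩
    rw [freeVerts_of_noFixed hKnf, fixedVerts_of_noFixed hKnf] at hKs
    norm_num [hKdef] at hKs
  have hEInonempty : (H₁.inter H₂).edges.Nonempty := by
    rw [Finset.nonempty_iff_ne_empty]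
    intro h
    rw [h] at hEIcard
    simp at hEIcard
    omega
  have hVI2 : 1 < (H₁.inter H₂).verts.card := by
    obtain ⟨e, he⟩ := hEInonempty
    exact Finset.one_lt_card.2 ⟨G.tail e, (H₁.inter H₂).tail_mem e he,
      G.head e, (H₁.inter H₂).head_mem e he, hnoloop e he⟩
  obtain ⟨b₀, hb₀I, hb₀v⟩ : ∃ b₀ ∈ (H₁.inter H₂).verts, b₀ ≠ v := by
    obtain ⟨a0, ha0, b1, hb1, hab⟩ := Finset.one_lt_card.1 hVI2
    by_cases h : a0 = v
    · exact ⟨b1, hb1, fun h' => hab (by rw [h, h'])⟩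
    · exact ⟨a0, ha0, h⟩
  have hb₀1 : b₀ ∈ H₁.verts := hIle1.1 hb₀I
  have hb₀2 : b₀ ∈ H₂.verts := hIle2.1 hb₀I
  -- potential on H₂
  obtain ⟨φ, hφ⟩ : ∃ φ : V → Multiplicative (ZMod k),
      ∀ (L : List (E × Bool)) (a b : V), IsWalk G H₂ L a b →
        walkGain G L = (φ a)⁻¹ * φ b := by
    refine ⟨fun x => if h : x ∈ H₂.verts then walkGain G (hc₂.2 b₀ hb₀2 x h).choose else 1, ?_⟩
    intro L a b hL
    have ha : a ∈ H₂.verts := isWalk_start_mem hL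
    have hb : b ∈ H₂.verts := isWalk_end_mem hL
    simp only [dif_pos ha, dif_pos hb]
    have hPa := (hc₂.2 b₀ hb₀2 a ha).choose_spec
    have hPb := (hc₂.2 b₀ hb₀2 b hb).choose_spec
    have h3 := balanced_gain_eq hnf₂ hbal₂ (isWalk_append hPa hL) hPb
    rw [walkGain_append] at h3
    rw [← h3, inv_mul_cancel_left]
  have hdelle : (H₁.inter H₂).deleteVertex v ≤ H₁.inter H₂ :=
    ⟨Finset.erase_subset _ _, Finset.filter_subset _ _⟩
  -- (I - v) is connected
  have hIdel : ∀ a ∈ (H₁.inter H₂).verts.erase v, ∀ b ∈ (H₁.inter H₂).verts.erase v,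
      Reachable G ((H₁.inter H₂).deleteVertex v) a b := by
    intro a ha b hb
    by_cases hvI : v ∈ (H₁.inter H₂).verts
    · by_contra hnr
      set I := H₁.inter H₂ with hIdef
      have haI : a ∈ I.verts := Finset.mem_of_mem_erase ha
      have hbI : b ∈ I.verts := Finset.mem_of_mem_erase hb
      have haeq : a ∈ (I.deleteVertex v).verts := ha
      set S : Finset V := (I.verts.erase v).filter
        (fun x => Reachable G (I.deleteVertex v) a x) with hSdef
      have haS : a ∈ S := Finset.mem_filter.2 ⟨ha, ⟨[], rfl, haeq⟩⟩
      have hbS : b ∉ S := fun h => hnr (Finset.mem_filter.1 h).2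
      have hSsub : S ⊆ I.verts.erase v := Finset.filter_subset _ _
      have hvS : v ∉ S := fun h => (Finset.mem_erase.1 (hSsub h)).1 rfl
      have hSsub' : S ⊆ I.verts := hSsub.trans (Finset.erase_subset _ _)
      have hstep : ∀ e ∈ I.edges, ∀ x y : V,
          ((x = G.tail e ∧ y = G.head e) ∨ (x = G.head e ∧ y = G.tail e)) →
          x ∈ S → y ∈ insert v S := by
        intro e he x y hxy hxS
        by_cases hyv : y = v
        · rw [hyv]; exact Finset.mem_insert_self _ _
        refine Finset.mem_insert_of_mem ?_
        have hxv : x ≠ v := (Finset.mem_erase.1 (hSsub hxS)).1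
        have hyI : y ∈ I.verts := by
          rcases hxy with ⟨-, rfl⟩ | ⟨-, rfl⟩
          · exact I.head_mem e he
          · exact I.tail_mem e he
        have hedel : e ∈ (I.deleteVertex v).edges := by
          refine Finset.mem_filter.2 ⟨he, ?_, ?_⟩
          · rcases hxy with ⟨hx', -⟩ | ⟨-, hy'⟩
            · rw [← hx']; exact hxv
            · rw [← hy']; exact hyv
          · rcases hxy with ⟨-, hy'⟩ | ⟨hx', -⟩
            · rw [← hy']; exact hyv
            · rw [← hx']; exact hxv
        have hywalk : ∃ s : E × Bool, s.1 ∈ (I.deleteVertex v).edges ∧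
            stepStart G s = x ∧ stepEnd G s = y := by
          rcases hxy with ⟨hx', hy'⟩ | ⟨hx', hy'⟩
          · exact ⟨(e, true), hedel, by simp [stepStart, hx'], by simp [stepEnd, hy']⟩
          · exact ⟨(e, false), hedel, by simp [stepStart, hx'], by simp [stepEnd, hy']⟩
        obtain ⟨s, hs1, hs2, hs3⟩ := hywalk
        have hyerase : y ∈ (I.deleteVertex v).verts := Finset.mem_erase.2 ⟨hyv, hyI⟩
        have hwalk1 : IsWalk G (I.deleteVertex v) [s] x y :=
          ⟨hs1, hs2, by rw [hs3], by rw [hs3]; exact hyerase⟩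
        obtain ⟨L, hL⟩ := (Finset.mem_filter.1 hxS).2
        exact Finset.mem_filter.2 ⟨Finset.mem_erase.2 ⟨hyv, hyI⟩,
          ⟨L ++ [s], isWalk_append hL hwalk1⟩⟩
      have hBtail : ∀ e ∈ I.edges.filter
          (fun e => ¬(G.tail e ∈ insert v S ∧ G.head e ∈ insert v S)),
          G.tail e ∈ I.verts \ S := by
        intro e he
        obtain ⟨he1, he2⟩ := Finset.mem_filter.1 he
        refine Finset.mem_sdiff.2 ⟨I.tail_mem e he1, fun hts => he2
          ⟨Finset.mem_insert_of_mem hts, hstep e he1 _ _ (Or.inl ⟨rfl, rfl⟩) hts⟩⟩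
      have hBhead : ∀ e ∈ I.edges.filter
          (fun e => ¬(G.tail e ∈ insert v S ∧ G.head e ∈ insert v S)),
          G.head e ∈ I.verts \ S := by
        intro e he
        obtain ⟨he1, he2⟩ := Finset.mem_filter.1 he
        refine Finset.mem_sdiff.2 ⟨I.head_mem e he1, fun hts => he2
          ⟨hstep e he1 _ _ (Or.inr ⟨rfl, rfl⟩) hts, Finset.mem_insert_of_mem hts⟩⟩
      set A : Subgraph G :=
        ⟨insert v S, I.edges.filter (fun e => G.tail e ∈ insert v S ∧ G.head e ∈ insert v S),
          fun e he => (Finset.mem_filter.1 he).2.1,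
          fun e he => (Finset.mem_filter.1 he).2.2⟩ with hAdef
      set B : Subgraph G :=
        ⟨I.verts \ S, I.edges.filter (fun e => ¬(G.tail e ∈ insert v S ∧ G.head e ∈ insert v S)),
          hBtail, hBhead⟩ with hBdef
      have hAle : A ≤ I := ⟨Finset.insert_subset hvI hSsub', Finset.filter_subset _ _⟩
      have hBle : B ≤ I := ⟨Finset.sdiff_subset, Finset.filter_subset _ _⟩
      have haneb : a ≠ b := by
        rintro rfl
        exact hnr ⟨[], rfl, haeq⟩
      have hAedge : A.edges.Nonempty := by
        obtain ⟨L, hL⟩ := hcI.2 a haI b hbI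
        cases L with
        | nil => exact absurd hL.1 haneb
        | cons s L' =>
          refine ⟨s.1, Finset.mem_filter.2 ⟨hL.1, ?_⟩⟩
          have hsa : stepStart G s = a := hL.2.1
          rcases step_cases (G := G) s with ⟨h1, h2⟩ | ⟨h1, h2⟩
          · have hta : G.tail s.1 = a := by rw [← h1, hsa]
            refine ⟨by rw [hta]; exact Finset.mem_insert_of_mem haS, ?_⟩
            exact hstep s.1 hL.1 a (G.head s.1) (Or.inl ⟨hta.symm, rfl⟩) haS
          · have hha : G.head s.1 = a := by rw [← h1, hsa]
            refine ⟨?_, by rw [hha]; exact Finset.mem_insert_of_mem haS⟩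
            exact hstep s.1 hL.1 a (G.tail s.1) (Or.inr ⟨hha.symm, rfl⟩) haS
      have hBedge : B.edges.Nonempty := by
        obtain ⟨L, hL⟩ := hcI.2 b hbI a haI
        cases L with
        | nil => exact absurd hL.1 (Ne.symm haneb)
        | cons s L' =>
          refine ⟨s.1, Finset.mem_filter.2 ⟨hL.1, ?_⟩⟩
          rintro ⟨ht, hh⟩
          have hsb : stepStart G s = b := hL.2.1
          have hbv : b ≠ v := (Finset.mem_erase.1 hb).1
          rcases step_cases (G := G) s with ⟨h1, -⟩ | ⟨h1, -⟩
          · have htb : G.tail s.1 = b := by rw [← h1, hsb]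
            rw [htb] at ht
            rcases Finset.mem_insert.1 ht with h | h
            · exact hbv h
            · exact hbS h
          · have hhb : G.head s.1 = b := by rw [← h1, hsb]
            rw [hhb] at hh
            rcases Finset.mem_insert.1 hh with h | h
            · exact hbv h
            · exact hbS h
      have hAnf : NoFixed G A := fun x hx => hnfI x (hAle.1 hx)
      have hBnf : NoFixed G B := fun x hx => hnfI x (hBle.1 hx)
      have hA := hspI A hAle hAedge
      have hB := hspI B hBle hBedge
      rw [freeVerts_of_noFixed hAnf, fixedVerts_of_noFixed hAnf] at hA
      rw [freeVerts_of_noFixed hBnf, fixedVerts_of_noFixed hBnf] at hB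
      have hcardsum : A.edges.card + B.edges.card = I.edges.card :=
        Finset.card_filter_add_card_filter_not _
      have hAv : A.verts.card = S.card + 1 := by
        show (insert v S).card = _
        rw [Finset.card_insert_of_notMem hvS]
      have hBv : B.verts.card = I.verts.card - S.card := by
        show (I.verts \ S).card = _
        rw [Finset.card_sdiff_of_subset hSsub']
      have hSle : S.card ≤ I.verts.card := Finset.card_le_card hSsub'
      rw [hAv] at hA
      rw [hBv] at hB
      simp only [hAdef, hBdef, Finset.card_empty, Nat.cast_zero, mul_zero, add_zero]
        at hA hB hcardsum
      omega
    · have hle' : H₁.inter H₂ ≤ (H₁.inter H₂).deleteVertex v := by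
        constructor
        · intro x hx
          exact Finset.mem_erase.2 ⟨fun h => hvI (h ▸ hx), hx⟩
        · intro e he
          exact Finset.mem_filter.2 ⟨he, fun h => hvI (h ▸ (H₁.inter H₂).tail_mem e he),
            fun h => hvI (h ▸ (H₁.inter H₂).head_mem e he)⟩
      obtain ⟨L, hL⟩ := hcI.2 a (Finset.mem_of_mem_erase ha) b (Finset.mem_of_mem_erase hb)
      exact ⟨L, isWalk_mono hle' L a b hL⟩
  -- canonical v-avoiding walks in I
  have hIwalk : ∀ p ∈ (H₁.inter H₂).verts, ∀ q ∈ (H₁.inter H₂).verts,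
      ∃ Q, IsWalk G (H₁.inter H₂) Q p q ∧
        (∀ z ∈ (Q.map (stepEnd G)).dropLast, z ≠ v) ∧
        walkGain G Q = (φ p)⁻¹ * φ q := by
    intro p hp q hq
    suffices h : ∃ Q, IsWalk G (H₁.inter H₂) Q p q ∧
        (∀ z ∈ (Q.map (stepEnd G)).dropLast, z ≠ v) by
      obtain ⟨Q, hQ, hav⟩ := h
      exact ⟨Q, hQ, hav, hφ Q p q (isWalk_mono hIle2 Q p q hQ)⟩
    have hstepv : v ∈ (H₁.inter H₂).verts → ∃ s : E × Bool,
        s.1 ∈ (H₁.inter H₂).edges ∧ stepStart G s = v ∧ stepEnd G s ≠ v ∧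
        stepEnd G s ∈ (H₁.inter H₂).verts := by
      intro hvI
      obtain ⟨L, hL⟩ := hcI.2 v hvI b₀ hb₀I
      cases L with
      | nil => exact absurd hL.1.symm hb₀v
      | cons s L' =>
        refine ⟨s, hL.1, hL.2.1, ?_, stepEnd_mem hL.1⟩
        intro hend
        rcases step_cases (G := G) s with ⟨h1, h2⟩ | ⟨h1, h2⟩
        · exact hnoloop s.1 hL.1 (by rw [← h1, ← h2, hL.2.1, hend])
        · exact hnoloop s.1 hL.1 (by rw [← h2, ← h1, hend, hL.2.1])
    have hdelverts : ∀ {L : List (E × Bool)} {x y : V},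
        IsWalk G ((H₁.inter H₂).deleteVertex v) L x y →
        ∀ z ∈ L.map (stepEnd G), z ≠ v := by
      intro L x y hL z hz
      have hz' : z ∈ ((H₁.inter H₂).deleteVertex v).verts :=
        isWalk_verts_mem hL z (List.mem_cons_of_mem _ hz)
      exact (Finset.mem_erase.1 hz').1
    by_cases hpv : p = v <;> by_cases hqv : q = v
    · rw [hpv, hqv]
      exact ⟨[], ⟨rfl, hpv ▸ hp⟩, by simp⟩
    · rw [hpv]
      have hp : v ∈ (H₁.inter H₂).verts := hpv ▸ hp
      obtain ⟨s, hs1, hs2, hs3, hs4⟩ := hstepv hp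
      obtain ⟨L₂, hL₂⟩ := hIdel (stepEnd G s) (Finset.mem_erase.2 ⟨hs3, hs4⟩) q
        (Finset.mem_erase.2 ⟨hqv, hq⟩)
      refine ⟨s :: L₂, ⟨hs1, hs2, isWalk_mono hdelle L₂ _ q hL₂⟩, ?_⟩
      intro z hz
      rw [List.map_cons] at hz
      rcases mem_dropLast_cons hz with rfl | hz'
      · exact hs3
      · exact hdelverts hL₂ z (mem_of_mem_dropLast hz')
    · rw [hqv]
      have hq : v ∈ (H₁.inter H₂).verts := hqv ▸ hq
      obtain ⟨s, hs1, hs2, hs3, hs4⟩ := hstepv hq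
      obtain ⟨L₂, hL₂⟩ := hIdel p (Finset.mem_erase.2 ⟨hpv, hp⟩) (stepEnd G s)
        (Finset.mem_erase.2 ⟨hs3, hs4⟩)
      have hrev : IsWalk G (H₁.inter H₂) [revStep s] (stepEnd G s) v := by
        refine ⟨hs1, stepStart_revStep s, ?_, ?_⟩
        · rw [stepEnd_revStep]; exact hs2
        · rw [stepEnd_revStep, hs2]; exact hq
      refine ⟨L₂ ++ [revStep s], isWalk_append (isWalk_mono hdelle L₂ p _ hL₂) hrev, ?_⟩
      intro z hz
      rw [List.map_append] at hz
      rcases mem_dropLast_append hz with hz' | hz'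
      · exact hdelverts hL₂ z hz'
      · simp at hz'
    · obtain ⟨L₂, hL₂⟩ := hIdel p (Finset.mem_erase.2 ⟨hpv, hp⟩) q
        (Finset.mem_erase.2 ⟨hqv, hq⟩)
      refine ⟨L₂, isWalk_mono hdelle L₂ p q hL₂, ?_⟩
      intro z hz
      exact hdelverts hL₂ z (mem_of_mem_dropLast hz)
  -- the projection and correction
  set π : V → V := fun x => if x ∈ H₁.verts then x else b₀ with hπdef
  set c : V → Multiplicative (ZMod k) :=
    fun x => if x ∈ H₁.verts then 1 else (φ x)⁻¹ * φ b₀ with hcdef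
  have hπeq : ∀ x ∈ H₁.verts, π x = x := by
    intro x hx; simp only [hπdef]; rw [if_pos hx]
  have hceq1 : ∀ x ∈ H₁.verts, c x = 1 := by
    intro x hx; simp only [hcdef]; rw [if_pos hx]
  have hπV1 : ∀ x, π x ∈ H₁.verts := by
    intro x
    simp only [hπdef]
    split
    · assumption
    · exact hb₀1
  have hπI : ∀ x ∈ H₂.verts, π x ∈ (H₁.inter H₂).verts := by
    intro x hx
    simp only [hπdef]
    split
    · exact Finset.mem_inter.2 ⟨by assumption, hx⟩
    · exact hb₀I
  have hπv : ∀ x, x ≠ v → π x ≠ v := by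
    intro x hx
    simp only [hπdef]
    split
    · exact hx
    · exact hb₀v
  have hcspec : ∀ x ∈ H₂.verts, c x = (φ x)⁻¹ * φ (π x) := by
    intro x hx
    simp only [hπdef, hcdef]
    split
    · rw [inv_mul_cancel]
    · rfl
  -- the key replacement lemma
  have key : ∀ (W : List (E × Bool)) (x y : V), IsWalk G (H₁.union H₂) W x y →
      ∃ W', IsWalk G H₁ W' (π x) (π y) ∧
        walkGain G W' = (c x)⁻¹ * walkGain G W * c y ∧
        (W = [] → W' = []) ∧
        ((∀ z ∈ (W.map (stepEnd G)).dropLast, z ≠ v) →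
          ∀ z ∈ (W'.map (stepEnd G)).dropLast, z ≠ v) := by
    intro W
    induction W with
    | nil =>
      intro x y hW
      obtain ⟨rfl, hx⟩ := hW
      refine ⟨[], ⟨rfl, hπV1 x⟩, ?_, fun _ => rfl, fun _ z hz => by simp at hz⟩
      rw [walkGain_nil, mul_one, inv_mul_cancel]
    | cons s W₀ ih =>
      intro x y hW
      obtain ⟨hsE, hsx, hW₀⟩ := hW
      obtain ⟨W₀', hw₀, hg₀, hnil₀, hav₀⟩ := ih (stepEnd G s) y hW₀
      by_cases hs1 : s.1 ∈ H₁.edges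
      · have hx1 : x ∈ H₁.verts := hsx ▸ stepStart_mem hs1
        have hz1 : stepEnd G s ∈ H₁.verts := stepEnd_mem hs1
        refine ⟨s :: W₀', ⟨hs1, by rw [hsx, hπeq x hx1], by rw [hπeq _ hz1] at hw₀; exact hw₀⟩,
          ?_, by intro h; exact absurd h (by simp), ?_⟩
        · rw [walkGain_cons, walkGain_cons, hg₀, hceq1 x hx1, hceq1 _ hz1]
          group
        · intro hav z hz
          rw [List.map_cons] at hz
          rcases mem_dropLast_cons hz with rfl | hz'
          · -- z = stepEnd s; need W₀' nonempty info: use cases on W₀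
            cases hW₀case : W₀ with
            | nil =>
              rw [hnil₀ hW₀case] at hz
              simp at hz
            | cons t W₁ =>
              refine hav (stepEnd G s) ?_
              rw [List.map_cons]
              exact self_mem_dropLast_cons _ (by simp [hW₀case])
          · refine hav₀ ?_ z hz'
            intro t ht
            refine hav t ?_
            rw [List.map_cons]
            exact mem_dropLast_cons_of_mem _ ht
      · have hs2 : s.1 ∈ H₂.edges := by
          rcases Finset.mem_union.1 hsE with h | h
          · exact absurd h hs1
          · exact h
        have hx2 : x ∈ H₂.verts := hsx ▸ stepStart_mem hs2
        have hz2 : stepEnd G s ∈ H₂.verts := stepEnd_mem hs2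
        have hsgain : stepGain G s = (φ x)⁻¹ * φ (stepEnd G s) := by
          rw [← walkGain_single]
          exact hφ [s] x (stepEnd G s) ⟨hs2, hsx, rfl, hz2⟩
        obtain ⟨Q, hQ, hQav, hQg⟩ := hIwalk (π x) (hπI x hx2) (π (stepEnd G s))
          (hπI _ hz2)
        refine ⟨Q ++ W₀', isWalk_append (isWalk_mono hIle1 Q _ _ hQ) hw₀, ?_,
          by intro h; exact absurd h (by simp), ?_⟩
        · rw [walkGain_append, hQg, hg₀, walkGain_cons, hsgain,
            hcspec x hx2, hcspec _ hz2]
          group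
        · intro hav z hz
          cases hW₀case : W₀ with
          | nil =>
            rw [hnil₀ hW₀case, List.append_nil] at hz
            exact hQav z hz
          | cons t W₁ =>
            have hzv : stepEnd G s ≠ v := by
              refine hav (stepEnd G s) ?_
              rw [List.map_cons]
              exact self_mem_dropLast_cons _ (by simp [hW₀case])
            rw [List.map_append] at hz
            rcases mem_dropLast_append hz with hz' | hz'
            · rcases isWalk_mapEnd_mem hQ z hz' with hz'' | rfl
              · exact hQav z hz''
              · exact hπv _ hzv
            · refine hav₀ ?_ z hz'
              intro t' ht'
              refine hav t' ?_
              rw [List.map_cons]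
              exact mem_dropLast_cons_of_mem _ ht'
  -- gain groups coincide
  have hGG : gainGroup G (H₁.union H₂) = gainGroup G H₁ := by
    apply le_antisymm
    · rw [gainGroup, Subgroup.closure_le]
      rintro g ⟨u, L, hL, -, rfl⟩
      obtain ⟨W', hW', hg, -, -⟩ := key L u u hL
      have hgain : walkGain G W' = walkGain G L := by
        rw [hg, mul_comm ((c u)⁻¹ * walkGain G L) (c u), mul_inv_cancel_left]
      exact SetLike.mem_coe.2 (Subgroup.subset_closure
        ⟨π u, W', hW', fun x hx => hnf₁ x (isWalk_verts_mem hW' x hx), hgain⟩)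
    · unfold gainGroup
      apply Subgroup.closure_mono
      rintro g ⟨u, L, hL, hfix, rfl⟩
      exact ⟨u, L, isWalk_mono h1leU L u u hL, hfix, rfl⟩
  have hiso : ∀ n, IsZIso G (H₁.union H₂) n → IsZIso G H₁ n := by
    intro n h
    unfold IsZIso at h ⊢
    rwa [hGG] at h
  refine ⟨⟨hnfU, v, Finset.mem_union_left _ hv, δ, ?_, ?_⟩,
    fun h => hni2 (hiso 2 h), fun h => hni3 (hiso 3 h)⟩
  · intro hb
    refine hNBA.1 ?_
    unfold Balanced at hb ⊢
    rw [← hGG]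
    exact hb
  · intro L hL hint
    obtain ⟨W', hW', hg, -, hav⟩ := key L v v hL
    have hgain : walkGain G W' = walkGain G L := by
      rw [hg, hceq1 v hv, inv_one, one_mul, mul_one]
    rw [← hgain]
    refine hNBA.2 W' ?_ (hav hint)
    rw [hπeq v hv] at hW'
    exact hW'

end GR
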